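/- The negative derivative at λ = 0 of ν_λ(0) = [Σᵢ 1/sinh(√(2λ)Lᵢ)]/[Σᵢ coth(√(2λ)Lᵢ)] equals (Σᵢ Lᵢ)/(Σᵢ 1/Lᵢ). In particular, if all Lᵢ = L, this equals L². -/

import Mathlib

open Real Set
open Filter Topology

/-- The Laplace transform of the first exit time from the spider with leg lengths
`L₁,…,L_N`, extended continuously by `1` at `λ = 0`. -/
noncomputable def nuExit (N : ℕ) (L : Fin N → ℝ) (lam : ℝ) : ℝ :=
  if lam = 0 then 1 else
    (∑ j : Fin N, 1 / Real.sinh (Real.sqrt (2*lam) * L j)) /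
      (∑ j : Fin N, Real.cosh (Real.sqrt (2*lam) * L j) /
        Real.sinh (Real.sqrt (2*lam) * L j))

lemma tendsto_sinh_div_self : Tendsto (fun t : ℝ => Real.sinh t / t) (𝓝[≠] 0) (𝓝 1) := by
  have h := hasDerivAt_iff_tendsto_slope.mp (Real.hasDerivAt_sinh 0)
  simp only [Real.cosh_zero] at h
  refine h.congr (fun t => ?_)
  simp [slope_def_field, Real.sinh_zero]

lemma tendsto_mul_const_punctured {c : ℝ} (hc : c ≠ 0) :
    Tendsto (fun t : ℝ => t * c) (𝓝[≠] (0:ℝ)) (𝓝[≠] 0) := by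
  rw [tendsto_nhdsWithin_iff]
  constructor
  · have : Tendsto (fun t : ℝ => t * c) (𝓝 0) (𝓝 (0 * c)) :=
      (continuous_id.mul continuous_const).tendsto 0
    simpa using this.mono_left nhdsWithin_le_nhds
  · filter_upwards [self_mem_nhdsWithin] with t ht
    exact mul_ne_zero ht hc

lemma tendsto_cosh_sub_one_div_sq :
    Tendsto (fun t : ℝ => (Real.cosh t - 1) / t ^ 2) (𝓝[≠] 0) (𝓝 (1/2)) := by
  have key : ∀ t : ℝ, t ≠ 0 →
      (Real.cosh t - 1) / t ^ 2 = (Real.sinh (t * (1/2)) / (t * (1/2))) ^ 2 / 2 := by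
    intro t ht
    have h1 : Real.cosh t = Real.cosh (t/2) ^ 2 + Real.sinh (t/2) ^ 2 := by
      have := Real.cosh_two_mul (t/2); rw [show 2 * (t/2) = t by ring] at this; exact this
    have h2 : Real.cosh (t/2) ^ 2 = Real.sinh (t/2) ^ 2 + 1 := Real.cosh_sq _
    have h3 : Real.cosh t - 1 = 2 * Real.sinh (t/2) ^ 2 := by rw [h1, h2]; ring
    rw [h3, show t * (1/2) = t/2 by ring]
    field_simp
  have hcomp : Tendsto (fun t : ℝ => (Real.sinh (t * (1/2)) / (t * (1/2))) ^ 2 / 2)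
      (𝓝[≠] 0) (𝓝 (1/2)) := by
    have := ((tendsto_sinh_div_self.comp (tendsto_mul_const_punctured (by norm_num : (1:ℝ)/2 ≠ 0))).pow 2).div_const 2
    simpa using this
  exact hcomp.congr' (by filter_upwards [self_mem_nhdsWithin] with t ht; exact (key t ht).symm) |>.congr (fun t => rfl)

lemma tendsto_sinh_mul_div {L : ℝ} (hL : L ≠ 0) :
    Tendsto (fun s : ℝ => Real.sinh (s * L) / s) (𝓝[≠] 0) (𝓝 L) := by
  have h := (tendsto_sinh_div_self.comp (tendsto_mul_const_punctured hL)).const_mul L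
  simp only [Function.comp] at h
  rw [mul_one] at h
  refine h.congr' ?_
  filter_upwards [self_mem_nhdsWithin] with s hs
  have : (s : ℝ) ≠ 0 := hs
  field_simp

lemma tendsto_cosh_mul_sub_one_div_sq {L : ℝ} (hL : L ≠ 0) :
    Tendsto (fun s : ℝ => (Real.cosh (s * L) - 1) / s ^ 2) (𝓝[≠] 0) (𝓝 (L ^ 2 / 2)) := by
  have h := (tendsto_cosh_sub_one_div_sq.comp (tendsto_mul_const_punctured hL)).const_mul (L^2)
  have h2 : L ^ 2 * (1/2) = L ^ 2 / 2 := by ring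
  rw [h2] at h
  refine h.congr' ?_
  filter_upwards [self_mem_nhdsWithin] with s hs
  have hs' : (s : ℝ) ≠ 0 := hs
  simp only [Function.comp]
  rw [mul_pow]
  field_simp

lemma tendsto_num_term {L : ℝ} (hL : 0 < L) :
    Tendsto (fun s : ℝ => (1 - Real.cosh (s * L)) / (s * Real.sinh (s * L)))
      (𝓝[>] (0:ℝ)) (𝓝 (-(L / 2))) := by
  have hmono : 𝓝[>] (0:ℝ) ≤ 𝓝[≠] 0 :=
    nhdsWithin_mono 0 (fun x hx => ne_of_gt hx)
  have hdiv : Tendsto (fun s : ℝ => -((Real.cosh (s * L) - 1) / s ^ 2 / (Real.sinh (s * L) / s)))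
      (𝓝[≠] 0) (𝓝 (-(L / 2))) := by
    have := ((tendsto_cosh_mul_sub_one_div_sq hL.ne').div (tendsto_sinh_mul_div hL.ne') hL.ne').neg
    have he : -(L ^ 2 / 2 / L) = -(L/2) := by field_simp
    rwa [he] at this
  refine (hdiv.mono_left hmono).congr' ?_
  filter_upwards [self_mem_nhdsWithin] with s hs
  have hs0 : (s:ℝ) ≠ 0 := ne_of_gt hs
  have hsinh : Real.sinh (s * L) ≠ 0 := ne_of_gt (Real.sinh_pos_iff.mpr (mul_pos hs hL))
  field_simp
  ring

lemma tendsto_den_term {L : ℝ} (hL : 0 < L) :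
    Tendsto (fun s : ℝ => s / 2 * (Real.cosh (s * L) / Real.sinh (s * L)))
      (𝓝[>] (0:ℝ)) (𝓝 (1 / (2 * L))) := by
  have hmono : 𝓝[>] (0:ℝ) ≤ 𝓝[≠] 0 :=
    nhdsWithin_mono 0 (fun x hx => ne_of_gt hx)
  have hcosh : Tendsto (fun s : ℝ => Real.cosh (s * L)) (𝓝[≠] 0) (𝓝 1) := by
    have : Tendsto (fun s : ℝ => Real.cosh (s * L)) (𝓝 0) (𝓝 (Real.cosh (0 * L))) :=
      (Real.continuous_cosh.comp (continuous_id.mul continuous_const)).tendsto 0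
    simpa using this.mono_left nhdsWithin_le_nhds
  have hdiv : Tendsto (fun s : ℝ => Real.cosh (s * L) / (Real.sinh (s * L) / s) / 2)
      (𝓝[≠] 0) (𝓝 (1 / (2 * L))) := by
    have := (hcosh.div (tendsto_sinh_mul_div hL.ne') hL.ne').div_const 2
    have he : 1 / L / 2 = 1 / (2 * L) := by ring
    rwa [he] at this
  refine (hdiv.mono_left hmono).congr' ?_
  filter_upwards [self_mem_nhdsWithin] with s hs
  have hs0 : (s:ℝ) ≠ 0 := ne_of_gt hs
  have hsinh : Real.sinh (s * L) ≠ 0 := ne_of_gt (Real.sinh_pos_iff.mpr (mul_pos hs hL))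
  field_simp


/-- The negative one-sided derivative at `λ = 0` of `ν_λ(0)` equals `(Σᵢ Lᵢ)/(Σᵢ 1/Lᵢ)`
(the mean exit time); in particular it equals `L²` when all legs have the same length `L`. -/
theorem nuExit_neg_deriv_at_zero (N : ℕ) (hN : 1 ≤ N) (L : Fin N → ℝ) (hL : ∀ i, 0 < L i) :
    HasDerivWithinAt (nuExit N L)
        (-((∑ i : Fin N, L i) / (∑ i : Fin N, 1 / L i))) (Ici (0:ℝ)) 0 ∧
      (∀ c : ℝ, (∀ i, L i = c) →
        (∑ i : Fin N, L i) / (∑ i : Fin N, 1 / L i) = c ^ 2) := by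
  have hNe : Nonempty (Fin N) := Fin.pos_iff_nonempty.mp hN
  set B : ℝ := ∑ i : Fin N, L i with hB
  set A : ℝ := ∑ i : Fin N, 1 / L i with hA
  have hApos : 0 < A := Finset.sum_pos (fun i _ => one_div_pos.mpr (hL i)) Finset.univ_nonempty
  have hBpos : 0 < B := Finset.sum_pos (fun i _ => hL i) Finset.univ_nonempty
  constructor
  · -- the derivative
    rw [hasDerivWithinAt_iff_tendsto_slope, Ici_sdiff_left]
    -- the limit of G along s → 0⁺
    set G : ℝ → ℝ := fun s =>
      (∑ j : Fin N, (1 - Real.cosh (s * L j)) / (s * Real.sinh (s * L j))) /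
        (∑ j : Fin N, s / 2 * (Real.cosh (s * L j) / Real.sinh (s * L j))) with hG
    have hGlim : Tendsto G (𝓝[>] (0:ℝ)) (𝓝 (-(B / A))) := by
      have hnum : Tendsto (fun s : ℝ =>
          ∑ j : Fin N, (1 - Real.cosh (s * L j)) / (s * Real.sinh (s * L j)))
          (𝓝[>] (0:ℝ)) (𝓝 (∑ j : Fin N, -(L j / 2))) :=
        tendsto_finset_sum _ (fun j _ => tendsto_num_term (hL j))
      have hden : Tendsto (fun s : ℝ =>
          ∑ j : Fin N, s / 2 * (Real.cosh (s * L j) / Real.sinh (s * L j)))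
          (𝓝[>] (0:ℝ)) (𝓝 (∑ j : Fin N, 1 / (2 * L j))) :=
        tendsto_finset_sum _ (fun j _ => tendsto_den_term (hL j))
      have hsum1 : (∑ j : Fin N, -(L j / 2)) = -(B/2) := by
        rw [hB, ← neg_div, ← Finset.sum_neg_distrib, Finset.sum_div]
        simp [neg_div]
      have hsum2 : (∑ j : Fin N, 1 / (2 * L j)) = A/2 := by
        rw [hA, Finset.sum_div]
        refine Finset.sum_congr rfl (fun j _ => ?_)
        rw [div_div, mul_comm]
      rw [hsum1] at hnum; rw [hsum2] at hden
      have := hnum.div hden (by positivity : A/2 ≠ 0)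
      have he : -(B/2) / (A/2) = -(B/A) := by
        field_simp
      rwa [he] at this
    -- slope equals G ∘ sqrt(2·)
    have hsqrt : Tendsto (fun lam : ℝ => Real.sqrt (2 * lam)) (𝓝[>] (0:ℝ)) (𝓝[>] 0) := by
      rw [tendsto_nhdsWithin_iff]
      constructor
      · have : Tendsto (fun lam : ℝ => Real.sqrt (2 * lam)) (𝓝 0) (𝓝 (Real.sqrt (2 * 0))) :=
          (Real.continuous_sqrt.comp (continuous_const.mul continuous_id)).tendsto 0
        simpa using this.mono_left nhdsWithin_le_nhds
      · filter_upwards [self_mem_nhdsWithin] with lam hlam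
        exact Real.sqrt_pos.mpr (by linarith [mem_Ioi.mp hlam])
    refine (hGlim.comp hsqrt).congr' ?_
    filter_upwards [self_mem_nhdsWithin] with lam hlam
    have hlam0 : (0:ℝ) < lam := hlam
    set s : ℝ := Real.sqrt (2 * lam) with hs
    have hspos : 0 < s := Real.sqrt_pos.mpr (by linarith)
    have hs2 : s ^ 2 = 2 * lam := Real.sq_sqrt (by linarith)
    have hsinh : ∀ j : Fin N, Real.sinh (s * L j) ≠ 0 :=
      fun j => ne_of_gt (Real.sinh_pos_iff.mpr (mul_pos hspos (hL j)))
    have hDen : 0 < ∑ j : Fin N, Real.cosh (s * L j) / Real.sinh (s * L j) :=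
      Finset.sum_pos (fun j _ => div_pos (Real.cosh_pos _)
        (Real.sinh_pos_iff.mpr (mul_pos hspos (hL j)))) Finset.univ_nonempty
    set Num : ℝ := ∑ j : Fin N, 1 / Real.sinh (s * L j) with hNum
    set Den : ℝ := ∑ j : Fin N, Real.cosh (s * L j) / Real.sinh (s * L j) with hDenDef
    have hslope : slope (nuExit N L) 0 lam = (Num / Den - 1) / lam := by
      rw [slope_def_field, nuExit, nuExit, if_neg (ne_of_gt hlam0), if_pos rfl, sub_zero]
    have hGnum : (∑ j : Fin N, (1 - Real.cosh (s * L j)) / (s * Real.sinh (s * L j)))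
        = (Num - Den) / s := by
      rw [hNum, hDenDef, ← Finset.sum_sub_distrib, Finset.sum_div]
      refine Finset.sum_congr rfl (fun j _ => ?_)
      rw [← sub_div, div_div, mul_comm s (Real.sinh (s * L j)), ← div_div]
    have hGden : (∑ j : Fin N, s / 2 * (Real.cosh (s * L j) / Real.sinh (s * L j)))
        = s / 2 * Den := by
      rw [hDenDef, Finset.mul_sum]
    rw [hslope]
    show (∑ j : Fin N, (1 - Real.cosh (s * L j)) / (s * Real.sinh (s * L j))) /
        (∑ j : Fin N, s / 2 * (Real.cosh (s * L j) / Real.sinh (s * L j)))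
        = (Num / Den - 1) / lam
    rw [hGnum, hGden]
    have hkey : s * (s / 2 * Den) = lam * Den := by
      rw [show s * (s / 2 * Den) = s ^ 2 * Den / 2 by ring, hs2]; ring
    calc (Num - Den) / s / (s / 2 * Den) = (Num - Den) / (lam * Den) := by
          rw [div_div, hkey]
      _ = (Num / Den - 1) / lam := by
          rw [div_sub_one hDen.ne', div_div, mul_comm Den lam]
  · intro c hc
    have hc0 : 0 < c := (hc (Classical.arbitrary (Fin N))) ▸ hL _
    have hN0 : (N:ℝ) ≠ 0 := Nat.cast_ne_zero.mpr (by omega)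
    rw [hB, hA]
    simp only [hc, Finset.sum_const, Finset.card_univ, Fintype.card_fin, nsmul_eq_mul]
    rw [mul_div_mul_left _ _ hN0, div_div_eq_mul_div, div_one, sq]
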